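/- Let ⊙ be a non-degenerate pseudo-multiplication on [0,∞] and let τ be a σ-maxitive measure on a measurable space (E, 𝔅) having the Radon–Nikodym property with respect to the idempotent ⊙-integral. Then τ has no ⊙-spot: there is no measurable set B₀ such that τ(B₀) is not ⊙-finite and, for every measurable A ⊆ B₀, τ(A) is either 0 or not ⊙-finite. -/

import Mathlib

open scoped ENNReal
open Set

/-- A pseudo-multiplication on `[0,∞]`: associative, monotone in each argument,
continuous on `(0,∞) × [0,∞]`, with `s ↦ s ⊙ t` continuous on `(0,∞]`,
admitting a left identity, without zero divisors, and with `0` as annihilator. -/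
structure PseudoMul where
  op : ℝ≥0∞ → ℝ≥0∞ → ℝ≥0∞
  assoc : ∀ a b c, op (op a b) c = op a (op b c)
  mono_left : ∀ t, Monotone fun s => op s t
  mono_right : ∀ s, Monotone fun t => op s t
  continuousOn : ContinuousOn (fun p : ℝ≥0∞ × ℝ≥0∞ => op p.1 p.2) (Ioo 0 ⊤ ×ˢ univ)
  continuousOn_left : ∀ t, ContinuousOn (fun s => op s t) (Ioi 0)
  one : ℝ≥0∞
  one_op : ∀ t, op one t = t
  no_zero_divisors : ∀ s t, op s t = 0 → s = 0 ∨ t = 0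
  zero_op : ∀ t, op 0 t = 0
  op_zero : ∀ t, op t 0 = 0

/-- An element `t` is `⊙`-finite if `⨅_{s>0} s ⊙ t = 0`. -/
def PseudoMul.OFinite (P : PseudoMul) (t : ℝ≥0∞) : Prop :=
  ⨅ s ∈ Ioi (0 : ℝ≥0∞), P.op s t = 0

/-- `⊙` is non-degenerate if its left identity is `⊙`-finite. -/
def PseudoMul.Nondegenerate (P : PseudoMul) : Prop :=
  P.OFinite P.one

/-- A σ-maxitive measure: vanishes on `∅` and turns countable unions of
measurable sets into suprema. -/
def SigmaMaxitive {E : Type*} [MeasurableSpace E] (ν : Set E → ℝ≥0∞) : Prop :=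
  ν ∅ = 0 ∧ ∀ B : ℕ → Set E, (∀ n, MeasurableSet (B n)) →
    ν (⋃ n, B n) = ⨆ n, ν (B n)

/-- The idempotent `⊙`-integral `∫_B f ⊙ dν = ⨆_{t ∈ [0,∞)} t ⊙ ν(B ∩ {f > t})`. -/
noncomputable def idemInt {E : Type*} [MeasurableSpace E] (P : PseudoMul) (ν : Set E → ℝ≥0∞)
    (f : E → ℝ≥0∞) (B : Set E) : ℝ≥0∞ :=
  ⨆ t ∈ Iio (⊤ : ℝ≥0∞), P.op t (ν (B ∩ {x | t < f x}))

/-- `ν ≪⊙ τ`: `ν(B) ≤ ∞ ⊙ τ(B)` whenever `τ(B)` is `⊙`-finite. -/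
def OAbsCont {E : Type*} [MeasurableSpace E] (P : PseudoMul)
    (ν τ : Set E → ℝ≥0∞) : Prop :=
  ∀ B : Set E, MeasurableSet B → P.OFinite (τ B) → ν B ≤ P.op ⊤ (τ B)

/-- `τ` is σ-`⊙`-finite. -/
def SigmaOFinite {E : Type*} [MeasurableSpace E] (P : PseudoMul)
    (τ : Set E → ℝ≥0∞) : Prop :=
  ∃ B : ℕ → Set E, (∀ n, MeasurableSet (B n)) ∧ (⋃ n, B n) = univ ∧
    ∀ n, P.OFinite (τ (B n))

/-- A σ-ideal of the σ-algebra: a nonempty collection of measurable sets closed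
under countable unions and under measurable subsets. -/
def IsSigmaIdeal {E : Type*} [MeasurableSpace E] (I : Set (Set E)) : Prop :=
  I.Nonempty ∧ (∀ A ∈ I, MeasurableSet A) ∧
    (∀ B : ℕ → Set E, (∀ n, B n ∈ I) → (⋃ n, B n) ∈ I) ∧
    (∀ A B : Set E, B ∈ I → A ⊆ B → MeasurableSet A → A ∈ I)

/-- `τ` is σ-principal. -/
def SigmaPrincipal {E : Type*} [MeasurableSpace E] (τ : Set E → ℝ≥0∞) : Prop :=
  ∀ I : Set (Set E), IsSigmaIdeal I → ∃ L ∈ I, ∀ S ∈ I, τ (S \ L) = 0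

/-- `τ` has the Radon–Nikodym property w.r.t. the idempotent `⊙`-integral. -/
def HasRNP {E : Type*} [MeasurableSpace E] (P : PseudoMul)
    (τ : Set E → ℝ≥0∞) : Prop :=
  ∀ ν : Set E → ℝ≥0∞, SigmaMaxitive ν → OAbsCont P ν τ →
    ∃ c : E → ℝ≥0∞, Measurable c ∧
      ∀ B : Set E, MeasurableSet B → ν B = idemInt P τ c B


/-- `⊙`-finiteness is downward closed. -/
lemma PseudoMul.OFinite.mono {P : PseudoMul} {a b : ℝ≥0∞} (hb : P.OFinite b) (hab : a ≤ b) :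
    P.OFinite a := by
  refine le_antisymm ?_ zero_le
  calc ⨅ s ∈ Ioi (0:ℝ≥0∞), P.op s a ≤ ⨅ s ∈ Ioi (0:ℝ≥0∞), P.op s b :=
        iInf₂_mono fun s _ => P.mono_right s hab
    _ = 0 := hb

lemma PseudoMul.oFinite_zero (P : PseudoMul) : P.OFinite 0 := by
  show (⨅ s ∈ Ioi (0:ℝ≥0∞), P.op s 0) = 0
  refine le_antisymm ?_ zero_le
  have h := iInf₂_le (f := fun s (_ : s ∈ Ioi (0:ℝ≥0∞)) => P.op s (0:ℝ≥0∞)) 1 (by simp)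
  simpa [P.op_zero] using h

lemma sigmaMaxitive_mono {E : Type*} [MeasurableSpace E] {τ : Set E → ℝ≥0∞}
    (hτ : SigmaMaxitive τ) {A B : Set E} (hA : MeasurableSet A) (hB : MeasurableSet B)
    (hAB : A ⊆ B) : τ A ≤ τ B := by
  set f : ℕ → Set E := fun n => if n = 0 then A else B with hf
  have hfm : ∀ n, MeasurableSet (f n) := by
    intro n; by_cases h : n = 0 <;> simp [hf, h, hA, hB]
  have hU : (⋃ n, f n) = B := by
    apply subset_antisymm
    · refine iUnion_subset fun n => ?_
      by_cases h : n = 0 <;> simp [hf, h, hAB]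
    · intro x hx; exact mem_iUnion.2 ⟨1, by simp [hf, hx]⟩
  have := hτ.2 f hfm
  rw [hU] at this
  calc τ A = τ (f 0) := by simp [hf]
    _ ≤ ⨆ n, τ (f n) := le_iSup (fun n => τ (f n)) 0
    _ = τ B := this.symm

/-- A σ-maxitive measure with the Radon–Nikodym property has no `⊙`-spot. -/
theorem no_spot_of_rnp {E : Type*} [MeasurableSpace E]
    (P : PseudoMul) (hP : P.Nondegenerate)
    (τ : Set E → ℝ≥0∞) (hτ : SigmaMaxitive τ) (hRNP : HasRNP P τ) :
    ¬ ∃ B₀ : Set E, MeasurableSet B₀ ∧ ¬ P.OFinite (τ B₀) ∧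
      ∀ A : Set E, MeasurableSet A → A ⊆ B₀ →
        τ A = 0 ∨ ¬ P.OFinite (τ A) := by
  rintro ⟨B₀, hB₀m, hB₀nf, hdich⟩
  have hone_ne : P.one ≠ 0 := by
    intro h
    have h1 := P.one_op ⊤
    rw [h, P.zero_op] at h1
    exact ENNReal.zero_ne_top h1
  -- the witness measure
  set ν : Set E → ℝ≥0∞ := fun B => if τ (B ∩ B₀) = 0 then 0 else P.one with hν
  have hνmax : SigmaMaxitive ν := by
    constructor
    · simp [hν, hτ.1]
    · intro B hBm
      have key : τ ((⋃ n, B n) ∩ B₀) = ⨆ n, τ (B n ∩ B₀) := by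
        rw [iUnion_inter]
        exact hτ.2 _ fun n => (hBm n).inter hB₀m
      by_cases hall : ∀ n, τ (B n ∩ B₀) = 0
      · have : τ ((⋃ n, B n) ∩ B₀) = 0 := by simp [key, hall]
        simp [hν, this, hall]
      · push_neg at hall
        obtain ⟨n₀, hn₀⟩ := hall
        have hne : τ ((⋃ n, B n) ∩ B₀) ≠ 0 := by
          rw [key]
          intro h
          exact hn₀ (le_antisymm (h ▸ le_iSup (fun n => τ (B n ∩ B₀)) n₀) zero_le)
        simp only [hν]
        rw [if_neg hne]
        refine le_antisymm ?_ ?_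
        · exact le_iSup_of_le n₀ (le_of_eq (if_neg hn₀).symm)
        · exact iSup_le fun n => by split <;> simp
  have hνac : OAbsCont P ν τ := by
    intro B hBm hBfin
    have h1 : τ (B ∩ B₀) ≤ τ B := sigmaMaxitive_mono hτ (hBm.inter hB₀m) hBm inter_subset_left
    have h2 : P.OFinite (τ (B ∩ B₀)) := hBfin.mono h1
    have h3 : τ (B ∩ B₀) = 0 :=
      ((hdich _ (hBm.inter hB₀m) inter_subset_right).resolve_right (fun h => h h2))
    simp [hν, h3]
  obtain ⟨c, hc, hrep⟩ := hRNP ν hνmax hνac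
  have hτB₀ne : τ B₀ ≠ 0 := fun h => hB₀nf (h ▸ P.oFinite_zero)
  have hνB₀ : ν B₀ = P.one := by simp [hν, hτB₀ne]
  have hint : idemInt P τ c B₀ = P.one := by rw [← hrep B₀ hB₀m, hνB₀]
  -- extract a nonzero term of the supremum
  have hex : ∃ t ∈ Iio (⊤ : ℝ≥0∞), P.op t (τ (B₀ ∩ {x | t < c x})) ≠ 0 := by
    by_contra h
    push_neg at h
    have : idemInt P τ c B₀ = 0 :=
      le_antisymm (iSup₂_le fun t ht => le_of_eq (h t ht)) zero_le
    exact hone_ne (this ▸ hint).symm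
  obtain ⟨t, ht, hterm⟩ := hex
  set u := τ (B₀ ∩ {x | t < c x}) with hu
  have htne : t ≠ 0 := fun h => hterm (by rw [h, P.zero_op])
  have hune : u ≠ 0 := fun h => hterm (by rw [h, P.op_zero])
  have hAm : MeasurableSet (B₀ ∩ {x | t < c x}) :=
    hB₀m.inter (hc measurableSet_Ioi)
  have hu_nf : ¬ P.OFinite u :=
    (hdich _ hAm inter_subset_left).resolve_left hune
  -- the term t ⊙ u is not ⊙-finite
  have hv_nf : ¬ P.OFinite (P.op t u) := by
    intro hv
    apply hu_nf
    show (⨅ s ∈ Ioi (0:ℝ≥0∞), P.op s u) = 0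
    refine le_antisymm ?_ zero_le
    calc (⨅ s ∈ Ioi (0:ℝ≥0∞), P.op s u)
        ≤ ⨅ r ∈ Ioi (0:ℝ≥0∞), P.op r (P.op t u) := ?_
      _ = 0 := hv
    refine le_iInf₂ fun r hr => ?_
    have hrt : P.op r t ∈ Ioi (0:ℝ≥0∞) := by
      rw [mem_Ioi, pos_iff_ne_zero]
      intro h
      rcases P.no_zero_divisors r t h with h | h
      · exact (ne_of_gt (mem_Ioi.1 hr)) h
      · exact htne h
    rw [← P.assoc]
    exact iInf₂_le (P.op r t) hrt
  -- but it is ≤ 1⊙, which is ⊙-finite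
  have hvle : P.op t u ≤ P.one := by
    rw [← hint]
    exact le_iSup₂ (f := fun (s : ℝ≥0∞) (_ : s ∈ Iio (⊤:ℝ≥0∞)) =>
      P.op s (τ (B₀ ∩ {x | s < c x}))) t ht
  exact hv_nf (hP.mono hvle)
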